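/- arXiv:1711.00230 — 7 statements merged into one kernel-verified Lean document; each statement's English description precedes it below -/
import Mathlib

section
/- A primitive positive-definite form ax²+bxy+cy² is Γ_0(2)-reduced with respect to the given fundamental region if and only if: |b| ≤ a, |b| ≤ 2c, and (|b| = a or |b| = 2c) implies b > 0. Moreover, the Γ_0(2)-reduced forms of discriminant -8 are exactly x²+2y², 2x²+y², and 3x²+2xy+y². -/
noncomputable def tauF (a b c : ℤ) : ℂ :=
  (-(b : ℂ) + Complex.I * Real.sqrt ((4 * a * c - b ^ 2 : ℤ) : ℝ)) / (2 * a)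

def QF : Set (ℤ × ℤ × ℤ) :=
  {q | 0 < q.1 ∧ q.2.1 ^ 2 - 4 * q.1 * q.2.2 < 0 ∧
    Int.gcd (Int.gcd q.1 q.2.1) q.2.2 = 1}

/-- The fundamental region for `Γ₀(2)` from the paper. -/
noncomputable def F2 : Set ℂ :=
  {τ | 0 < τ.im ∧ |τ.re| ≤ 1 / 2 ∧
    1 / 2 ≤ ‖τ - 1 / 2‖ ∧ 1 / 2 ≤ ‖τ + 1 / 2‖ ∧
    ((|τ.re| = 1 / 2 ∨ ‖τ - 1 / 2‖ = 1 / 2 ∨ ‖τ + 1 / 2‖ = 1 / 2) →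
      τ.re < 0)}

lemma tauF_re (a b c : ℤ) : (tauF a b c).re = -(b:ℝ)/(2*a) := by
  simp only [tauF, Complex.div_re, Complex.normSq, Complex.add_re]
  simp
  rcases eq_or_ne ((2:ℝ)*(a:ℝ)) 0 with h|h
  · simp [h]
  · field_simp

lemma tauF_im (a b c : ℤ) :
    (tauF a b c).im = Real.sqrt ((4 * a * c - b ^ 2 : ℤ) : ℝ)/(2*a) := by
  simp only [tauF, Complex.div_im, Complex.normSq]
  simp
  rcases eq_or_ne ((2:ℝ)*(a:ℝ)) 0 with h|h
  · simp [h]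
  · field_simp

lemma main_iff (a b c : ℤ) (ha : 0 < a) (hd : b ^ 2 - 4 * a * c < 0) :
    tauF a b c ∈ F2 ↔
      (|b| ≤ a ∧ |b| ≤ 2 * c ∧ ((|b| = a ∨ |b| = 2 * c) → 0 < b)) := by
  have hc : 0 < c := by nlinarith [sq_nonneg b]
  set A : ℝ := (a : ℝ) with hA
  set X : ℝ := (b : ℝ) with hX
  set C : ℝ := (c : ℝ) with hC
  have hA0 : 0 < A := by rw [hA]; exact_mod_cast ha
  have hD0 : (0:ℝ) < 4 * A * C - X ^ 2 := by
    have h1 : (0:ℤ) < 4 * a * c - b ^ 2 := by linarith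
    rw [hA, hX, hC]
    exact_mod_cast h1
  set s : ℝ := Real.sqrt ((4 * a * c - b ^ 2 : ℤ) : ℝ) with hs
  have hcast : ((4 * a * c - b ^ 2 : ℤ) : ℝ) = 4 * A * C - X ^ 2 := by
    rw [hA, hX, hC]; push_cast; ring
  have hsq : s ^ 2 = 4 * A * C - X ^ 2 := by
    rw [hs, hcast, Real.sq_sqrt (le_of_lt hD0)]
  have hs0 : 0 < s := by
    rw [hs, hcast]; exact Real.sqrt_pos.mpr hD0
  have hre : (tauF a b c).re = -X/(2*A) := tauF_re a b c
  have him : (tauF a b c).im = s/(2*A) := tauF_im a b c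
  have hss : s / (2*A) * (s / (2*A)) = (4*A*C - X^2) / (2*A*(2*A)) := by
    rw [div_mul_div_comm, ← pow_two, hsq]
  have hn1 : Complex.normSq (tauF a b c - 1/2) = (2*C + X)/(2*A) + 1/4 := by
    rw [Complex.normSq_apply]
    simp only [Complex.sub_re, Complex.sub_im, hre, him]
    norm_num
    rw [hss]; field_simp; ring
  have hn2 : Complex.normSq (tauF a b c + 1/2) = (2*C - X)/(2*A) + 1/4 := by
    rw [Complex.normSq_apply]
    simp only [Complex.add_re, Complex.add_im, hre, him]
    norm_num
    rw [hss]; field_simp; ring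
  -- component iffs
  have h1 : 0 < (tauF a b c).im := by rw [him]; positivity
  have h2 : (|(tauF a b c).re| ≤ 1/2) ↔ |b| ≤ a := by
    rw [hre, abs_div, abs_neg, abs_of_pos (by linarith : (0:ℝ) < 2*A),
      div_le_iff₀ (by linarith), hX, hA, ← Int.cast_abs]
    constructor
    · intro h
      exact_mod_cast (by linarith : ((|b| : ℤ) : ℝ) ≤ ((a:ℤ):ℝ))
    · intro h
      have h' : ((|b| : ℤ) : ℝ) ≤ ((a:ℤ):ℝ) := by exact_mod_cast h
      linarith
  have h2e : (|(tauF a b c).re| = 1/2) ↔ |b| = a := by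
    rw [hre, abs_div, abs_neg, abs_of_pos (by linarith : (0:ℝ) < 2*A),
      div_eq_iff (by linarith : (2*A) ≠ 0), hX, hA, ← Int.cast_abs]
    constructor
    · intro h
      exact_mod_cast (by linarith : ((|b| : ℤ) : ℝ) = ((a:ℤ):ℝ))
    · intro h
      have h' : ((|b| : ℤ) : ℝ) = ((a:ℤ):ℝ) := by exact_mod_cast h
      linarith
  have h3 : (1/2 ≤ ‖tauF a b c - 1/2‖) ↔ -(2*c) ≤ b := by
    rw [Complex.norm_def, Real.le_sqrt' (by norm_num), hn1]
    rw [show ((1:ℝ)/2)^2 = 1/4 by norm_num]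
    constructor
    · intro h
      have h' : (0:ℝ) ≤ (2*C + X)/(2*A) := by linarith
      have : (0:ℝ) ≤ 2*C + X := by
        by_contra hcon
        push_neg at hcon
        have := div_neg_of_neg_of_pos hcon (by linarith : (0:ℝ) < 2*A)
        linarith
      have : ((-(2*c) : ℤ) : ℝ) ≤ ((b:ℤ):ℝ) := by push_cast; rw [← hC, ← hX] at *; linarith
      exact_mod_cast this
    · intro h
      have : ((-(2*c) : ℤ) : ℝ) ≤ ((b:ℤ):ℝ) := by exact_mod_cast h
      have h0 : (0:ℝ) ≤ 2*C + X := by rw [hC, hX]; push_cast at this ⊢; linarith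
      have := div_nonneg h0 (by linarith : (0:ℝ) ≤ 2*A)
      linarith
  have h3e : (‖tauF a b c - 1/2‖ = 1/2) ↔ b = -(2*c) := by
    rw [Complex.norm_def,
      show (1/2:ℝ) = Real.sqrt (1/4) by
        rw [show (1/4:ℝ) = (1/2)^2 by norm_num, Real.sqrt_sq (by norm_num)],
      Real.sqrt_inj (Complex.normSq_nonneg _) (by norm_num), hn1]
    constructor
    · intro h
      have h' : (2*C + X)/(2*A) = 0 := by linarith
      have : 2*C + X = 0 := by
        rcases div_eq_zero_iff.mp h' with h0 | h0
        · exact h0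
        · linarith
      have : ((b:ℤ):ℝ) = ((-(2*c):ℤ):ℝ) := by push_cast; rw [← hC, ← hX] at *; linarith
      exact_mod_cast this
    · intro h
      have : ((b:ℤ):ℝ) = ((-(2*c):ℤ):ℝ) := by exact_mod_cast h
      have h0 : 2*C + X = 0 := by rw [hC, hX]; push_cast at this ⊢; linarith
      rw [h0]; norm_num
  have h4 : (1/2 ≤ ‖tauF a b c + 1/2‖) ↔ b ≤ 2*c := by
    rw [Complex.norm_def, Real.le_sqrt' (by norm_num), hn2]
    rw [show ((1:ℝ)/2)^2 = 1/4 by norm_num]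
    constructor
    · intro h
      have h' : (0:ℝ) ≤ (2*C - X)/(2*A) := by linarith
      have : (0:ℝ) ≤ 2*C - X := by
        by_contra hcon
        push_neg at hcon
        have := div_neg_of_neg_of_pos hcon (by linarith : (0:ℝ) < 2*A)
        linarith
      have : ((b:ℤ):ℝ) ≤ ((2*c : ℤ) : ℝ) := by push_cast; rw [← hC, ← hX] at *; linarith
      exact_mod_cast this
    · intro h
      have : ((b:ℤ):ℝ) ≤ ((2*c:ℤ):ℝ) := by exact_mod_cast h
      have h0 : (0:ℝ) ≤ 2*C - X := by rw [hC, hX]; push_cast at this ⊢; linarith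
      have := div_nonneg h0 (by linarith : (0:ℝ) ≤ 2*A)
      linarith
  have h4e : (‖tauF a b c + 1/2‖ = 1/2) ↔ b = 2*c := by
    rw [Complex.norm_def,
      show (1/2:ℝ) = Real.sqrt (1/4) by
        rw [show (1/4:ℝ) = (1/2)^2 by norm_num, Real.sqrt_sq (by norm_num)],
      Real.sqrt_inj (Complex.normSq_nonneg _) (by norm_num), hn2]
    constructor
    · intro h
      have h' : (2*C - X)/(2*A) = 0 := by linarith
      have : 2*C - X = 0 := by
        rcases div_eq_zero_iff.mp h' with h0 | h0
        · exact h0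
        · linarith
      have : ((b:ℤ):ℝ) = ((2*c:ℤ):ℝ) := by push_cast; rw [← hC, ← hX] at *; linarith
      exact_mod_cast this
    · intro h
      have : ((b:ℤ):ℝ) = ((2*c:ℤ):ℝ) := by exact_mod_cast h
      have h0 : 2*C - X = 0 := by rw [hC, hX]; push_cast at this ⊢; linarith
      rw [h0]; norm_num
  have h5 : ((tauF a b c).re < 0) ↔ 0 < b := by
    rw [hre]
    constructor
    · intro h
      have : 0 < X := by
        by_contra hcon
        push_neg at hcon
        have : 0 ≤ -X := by linarith
        have := div_nonneg this (by linarith : (0:ℝ) ≤ 2*A)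
        linarith
      rw [hX] at this; exact_mod_cast this
    · intro h
      have hx : 0 < X := by rw [hX]; exact_mod_cast h
      have : -X < 0 := by linarith
      exact div_neg_of_neg_of_pos this (by linarith)
  constructor
  · rintro ⟨-, m2, m3, m4, m5⟩
    rw [h2] at m2
    rw [h3] at m3
    rw [h4] at m4
    refine ⟨m2, by rw [abs_le]; omega, ?_⟩
    intro hor
    apply (h5.mp ∘ m5)
    rcases hor with h | h
    · exact Or.inl (h2e.mpr h)
    · rcases abs_eq (by omega : (0:ℤ) ≤ 2*c) |>.mp h with h' | h'
      · exact Or.inr (Or.inr (h4e.mpr h'))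
      · exact Or.inr (Or.inl (h3e.mpr h'))
  · rintro ⟨m2, m3, m5⟩
    refine ⟨h1, h2.mpr m2, h3.mpr (by rw [abs_le] at m3; omega),
      h4.mpr (by rw [abs_le] at m3; omega), ?_⟩
    intro hor
    apply h5.mpr
    apply m5
    rcases hor with h | h | h
    · exact Or.inl (h2e.mp h)
    · have := h3e.mp h
      right; rw [abs_eq (by omega : (0:ℤ) ≤ 2*c)]; omega
    · have := h4e.mp h
      right; rw [abs_eq (by omega : (0:ℤ) ≤ 2*c)]; omega

/-- `ax² + bxy + cy²` is `Γ₀(2)`-reduced iff `|b| ≤ a`, `|b| ≤ 2c`, and `(|b| = a` or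
`|b| = 2c)` implies `b > 0`; and the `Γ₀(2)`-reduced forms of discriminant `-8` are exactly
`x² + 2y²`, `2x² + y²`, `3x² + 2xy + y²`. -/
theorem stmt_5 :
    (∀ a b c : ℤ, (a, b, c) ∈ QF →
      (tauF a b c ∈ F2 ↔
        (|b| ≤ a ∧ |b| ≤ 2 * c ∧ ((|b| = a ∨ |b| = 2 * c) → 0 < b)))) ∧
    {A : ℤ × ℤ × ℤ | A ∈ QF ∧ A.2.1 ^ 2 - 4 * A.1 * A.2.2 = -8 ∧
        tauF A.1 A.2.1 A.2.2 ∈ F2} =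
      {(1, 0, 2), (2, 0, 1), (3, 2, 1)} := by
  constructor
  · intro a b c hq
    exact main_iff a b c hq.1 hq.2.1
  · ext ⟨a, b, c⟩
    simp only [Set.mem_setOf_eq, Set.mem_insert_iff, Set.mem_singleton_iff, QF,
      Prod.mk.injEq]
    constructor
    · rintro ⟨⟨ha, hd, hg⟩, hdisc, hF⟩
      rw [main_iff a b c ha hd] at hF
      obtain ⟨hba, hbc, hbd⟩ := hF
      have hc : 0 < c := by nlinarith [sq_nonneg b]
      have hb2 : b^2 ≤ 2*a*c := by nlinarith [abs_nonneg b, sq_abs b]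
      have hac : a*c ≤ 4 := by nlinarith
      have ha4 : a ≤ 4 := by nlinarith
      have hc4 : c ≤ 4 := by nlinarith
      have hb4 : -4 ≤ b ∧ b ≤ 4 := abs_le.mp (by omega)
      obtain ⟨hb1, hb2'⟩ := hb4
      rcases abs_cases b with ⟨he, _⟩ | ⟨he, _⟩ <;> rw [he] at hba hbc hbd <;>
        interval_cases a <;> interval_cases c <;> interval_cases b <;>
          simp_all 
    · rintro (⟨rfl, rfl, rfl⟩ | ⟨rfl, rfl, rfl⟩ | ⟨rfl, rfl, rfl⟩) <;>
        refine ⟨⟨by norm_num, by norm_num, by decide⟩, by norm_num, ?_⟩ <;>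
        · rw [main_iff _ _ _ (by norm_num) (by norm_num)]
          norm_num
end

section
/- For any primitive positive-definite binary quadratic form Q of negative discriminant D and any coprime positive integers M, N, there exists a form Q' which is Γ_0(N)-equivalent to Q such that Q'(1,0) is coprime to M. -/
def actF (p q r s : ℤ) (A : ℤ × ℤ × ℤ) : ℤ × ℤ × ℤ :=
  (A.1 * p ^ 2 + A.2.1 * p * r + A.2.2 * r ^ 2,
   2 * A.1 * p * q + A.2.1 * (p * s + q * r) + 2 * A.2.2 * r * s,
   A.1 * q ^ 2 + A.2.1 * q * s + A.2.2 * s ^ 2)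

/-- A helper: two naturals are coprime if no prime divides both. -/
lemma coprime_of_no_common_prime (x y : ℕ)
    (h : ∀ ℓ : ℕ, ℓ.Prime → ℓ ∣ x → ℓ ∣ y → False) : Nat.Coprime x y := by
  by_contra h1
  obtain ⟨ℓ, hp, hd⟩ := Nat.exists_prime_and_dvd h1
  exact h ℓ hp (hd.trans (Nat.gcd_dvd_left _ _)) (hd.trans (Nat.gcd_dvd_right _ _))

/-- For any primitive positive-definite form `Q` of negative discriminant and coprime positive
integers `M, N`, there is a form `Q'` which is `Γ₀(N)`-equivalent to `Q` whose leading
coefficient `Q'(1,0)` is coprime to `M`. -/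
theorem stmt_9 (D : ℤ) (M N : ℕ) (hM : 0 < M) (hN : 0 < N) (hMN : Nat.Coprime M N)
    (A : ℤ × ℤ × ℤ) (hA : A ∈ QF) (hdisc : A.2.1 ^ 2 - 4 * A.1 * A.2.2 = D) (hD : D < 0) :
    ∃ p q r s : ℤ, p * s - q * r = 1 ∧ (N : ℤ) ∣ r ∧
      Int.gcd (actF p q r s A).1 M = 1 := by
  classical
  obtain ⟨a, b, c⟩ := A
  obtain ⟨ha, hneg, hgcd⟩ := hA
  simp only at ha hneg hgcd ⊢
  set F := M.primeFactors with hF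
  set S1 := F.filter (fun ℓ : ℕ => ¬ ((ℓ:ℤ) ∣ a)) with hS1
  set S2 := F.filter (fun ℓ : ℕ => ((ℓ:ℤ) ∣ a) ∧ ¬ ((ℓ:ℤ) ∣ c)) with hS2
  set S3 := F.filter (fun ℓ : ℕ => ((ℓ:ℤ) ∣ a) ∧ ((ℓ:ℤ) ∣ c)) with hS3
  set s1 : ℕ := ∏ ℓ ∈ S1, ℓ with hs1
  set s2 : ℕ := ∏ ℓ ∈ S2, ℓ with hs2
  set s3 : ℕ := ∏ ℓ ∈ S3, ℓ with hs3
  -- prime divisors of these products lie in the index sets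
  have mem_of_dvd : ∀ (T : Finset ℕ), T ⊆ F → ∀ ℓ : ℕ, ℓ.Prime →
      ℓ ∣ ∏ q ∈ T, q → ℓ ∈ T := by
    intro T hT ℓ hℓ hd
    obtain ⟨q, hq, hdq⟩ := (Prime.dvd_finset_prod_iff hℓ.prime _).mp hd
    have hqp : q.Prime := Nat.prime_of_mem_primeFactors (hT hq)
    rwa [(Nat.prime_dvd_prime_iff_eq hℓ hqp).mp hdq]
  have hS1F : S1 ⊆ F := Finset.filter_subset _ _
  have hS2F : S2 ⊆ F := Finset.filter_subset _ _
  have hS3F : S3 ⊆ F := Finset.filter_subset _ _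
  -- coprimality needed for the CRT step
  have hcop : Nat.Coprime s2 (N * s1 * s3) := by
    apply coprime_of_no_common_prime
    intro ℓ hℓ h2 h13
    have hℓ2 := mem_of_dvd S2 hS2F ℓ hℓ h2
    rw [hS2, Finset.mem_filter] at hℓ2
    obtain ⟨hℓF, hℓa, hℓc⟩ := hℓ2
    have hℓM : ℓ ∣ M := Nat.dvd_of_mem_primeFactors hℓF
    rcases (Nat.Prime.dvd_mul hℓ).mp h13 with h' | h3
    · rcases (Nat.Prime.dvd_mul hℓ).mp h' with hN' | h1
      · exact hℓ.ne_one (Nat.dvd_one.mp (hMN ▸ Nat.dvd_gcd hℓM hN'))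
      · have := mem_of_dvd S1 hS1F ℓ hℓ h1
        rw [hS1, Finset.mem_filter] at this
        exact this.2 hℓa
    · have := mem_of_dvd S3 hS3F ℓ hℓ h3
      rw [hS3, Finset.mem_filter] at this
      exact hℓc this.2.2
  have hcopZ : IsCoprime (s2 : ℤ) ((N : ℤ) * s1 * s3) := by
    have := Nat.isCoprime_iff_coprime.mpr hcop
    push_cast at this
    exact this
  obtain ⟨u, v, huv⟩ := hcopZ
  set r : ℤ := (N : ℤ) * s1 with hr
  set p : ℤ := u * s2 with hp
  have hpm1 : r * (s3 : ℤ) ∣ p - 1 := ⟨-v, by linear_combination huv⟩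
  have hs2p : (s2 : ℤ) ∣ p := ⟨u, mul_comm u (s2:ℤ)⟩
  refine ⟨p, (s3 : ℤ) * (-v), r, 1, ?_, ⟨(s1 : ℤ), hr⟩, ?_⟩
  · linear_combination huv
  · -- gcd of leading coefficient with M
    set X : ℤ := a * p ^ 2 + b * p * r + c * r ^ 2 with hX
    show Int.gcd X M = 1
    have key : Nat.Coprime X.natAbs M := by
      apply coprime_of_no_common_prime
      intro ℓ hℓ hℓX hℓM
      have hℓXZ : (ℓ : ℤ) ∣ X := by
        rwa [← Int.natAbs_dvd_natAbs, Int.natAbs_natCast]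
      have hℓF : ℓ ∈ F := Nat.mem_primeFactors.mpr ⟨hℓ, hℓM, hM.ne'⟩
      have hℓZp : Prime (ℓ : ℤ) := Nat.prime_iff_prime_int.mp hℓ
      have hnot1 : ¬ (ℓ : ℤ) ∣ 1 := fun h => hℓZp.not_unit (isUnit_of_dvd_one h)
      have hℓN : ¬ (ℓ : ℤ) ∣ (N : ℤ) := by
        intro h
        rw [Int.natCast_dvd_natCast] at h
        exact hℓ.ne_one (Nat.dvd_one.mp (hMN ▸ Nat.dvd_gcd hℓM h))
      -- being 1 mod s3 and r
      have hnotp_of_p1 : (ℓ : ℤ) ∣ p - 1 → ¬ (ℓ : ℤ) ∣ p := by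
        intro h1 hp'
        exact hnot1 (by simpa using dvd_sub hp' h1)
      by_cases hℓa : (ℓ : ℤ) ∣ a
      · have hℓr : ¬ (ℓ : ℤ) ∣ r := by
          intro hr'
          rcases hℓZp.dvd_mul.mp (hr ▸ hr') with hN' | h1
          · exact hℓN hN'
          · have h1' : ℓ ∣ s1 := by exact_mod_cast h1
            have := mem_of_dvd S1 hS1F ℓ hℓ h1'
            rw [hS1, Finset.mem_filter] at this
            exact this.2 hℓa
        by_cases hℓc : (ℓ : ℤ) ∣ c
        · -- case 3 : ℓ ∣ a, ℓ ∣ c, hence ℓ ∤ b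
          have hℓb : ¬ (ℓ : ℤ) ∣ b := by
            intro hb
            have h2 : (ℓ : ℤ) ∣ (Int.gcd (Int.gcd a b) c : ℤ) :=
              Int.dvd_coe_gcd (Int.dvd_coe_gcd hℓa hb) hℓc
            rw [hgcd] at h2
            exact hnot1 (by simpa using h2)
          have hℓ3 : ℓ ∈ S3 := by
            rw [hS3, Finset.mem_filter]; exact ⟨hℓF, hℓa, hℓc⟩
          have hℓs3 : (ℓ : ℤ) ∣ (s3 : ℤ) :=
            Int.natCast_dvd_natCast.mpr (Finset.dvd_prod_of_mem _ hℓ3)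
          have hℓp1 : (ℓ : ℤ) ∣ p - 1 :=
            (hℓs3.trans (dvd_mul_left _ _)).trans hpm1
          have hℓbpr : (ℓ : ℤ) ∣ b * p * r := by
            have : (ℓ : ℤ) ∣ X - a * p ^ 2 - c * r ^ 2 :=
              dvd_sub (dvd_sub hℓXZ (hℓa.mul_right _)) (hℓc.mul_right _)
            have e : X - a * p ^ 2 - c * r ^ 2 = b * p * r := by rw [hX]; ring
            rwa [e] at this
          rcases hℓZp.dvd_mul.mp hℓbpr with hb' | hr'
          · rcases hℓZp.dvd_mul.mp hb' with hb'' | hp'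
            · exact hℓb hb''
            · exact hnotp_of_p1 hℓp1 hp'
          · exact hℓr hr'
        · -- case 2 : ℓ ∣ a, ℓ ∤ c
          have hℓ2 : ℓ ∈ S2 := by
            rw [hS2, Finset.mem_filter]; exact ⟨hℓF, hℓa, hℓc⟩
          have hℓp : (ℓ : ℤ) ∣ p :=
            (Int.natCast_dvd_natCast.mpr (Finset.dvd_prod_of_mem _ hℓ2)).trans hs2p
          have hℓcr2 : (ℓ : ℤ) ∣ c * r ^ 2 := by
            have : (ℓ : ℤ) ∣ X - a * p ^ 2 - b * p * r :=
              dvd_sub (dvd_sub hℓXZ (hℓa.mul_right _))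
                ((hℓp.mul_left b).mul_right r)
            have e : X - a * p ^ 2 - b * p * r = c * r ^ 2 := by rw [hX]; ring
            rwa [e] at this
          rcases hℓZp.dvd_mul.mp hℓcr2 with hc' | hr2
          · exact hℓc hc'
          · exact hℓr (hℓZp.dvd_of_dvd_pow hr2)
      · -- case 1 : ℓ ∤ a
        have hℓ1 : ℓ ∈ S1 := by
          rw [hS1, Finset.mem_filter]; exact ⟨hℓF, hℓa⟩
        have hℓr : (ℓ : ℤ) ∣ r := by
          rw [hr]
          exact ((Int.natCast_dvd_natCast.mpr (Finset.dvd_prod_of_mem _ hℓ1))).mul_left _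
        have hℓap2 : (ℓ : ℤ) ∣ a * p ^ 2 := by
          have : (ℓ : ℤ) ∣ X - b * p * r - c * r ^ 2 :=
            dvd_sub (dvd_sub hℓXZ (hℓr.mul_left _)) ((hℓr.trans (dvd_pow_self r two_ne_zero)).mul_left c)
          have e : X - b * p * r - c * r ^ 2 = a * p ^ 2 := by rw [hX]; ring
          rwa [e] at this
        rcases hℓZp.dvd_mul.mp hℓap2 with ha' | hp2
        · exact hℓa ha'
        · have hℓp : (ℓ : ℤ) ∣ p := hℓZp.dvd_of_dvd_pow hp2
          have hℓp1 : (ℓ : ℤ) ∣ p - 1 := (hℓr.mul_right _).trans hpm1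
          exact hnotp_of_p1 hℓp1 hℓp
    rwa [Int.gcd, Int.natAbs_natCast]
end

section
/- Let O be an order of conductor f in an imaginary quadratic field K, and let a be an O_K-ideal with a + Nf·O_K = O_K. Then the natural map O/(a ∩ O) → O_K/a is an isomorphism; in particular N(a) = N(a ∩ O), and (a ∩ O)·O_K = a. -/
/-- Let `O = ℤ + f·O_K` be the order of conductor `f` in an imaginary quadratic field `K` and
let `A` be an `O_K`-ideal with `A + Nf·O_K = O_K`. Then the natural map
`O/(A ∩ O) → O_K/A` is an isomorphism (it is injective by definition, and surjective), in
particular `N(A) = N(A ∩ O)`, and `(A ∩ O)·O_K = A`. -/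
theorem stmt_11 (K : Type*) [Field K] [NumberField K]
    (hdeg : Module.finrank ℚ K = 2)
    (himag : IsEmpty (K →+* ℝ))
    (f : ℕ) (hf : 0 < f) (N : ℕ) (hN : 0 < N)
    (OK : Subring K) (hOK : (OK : Set K) = ((integralClosure ℤ K : Subalgebra ℤ K) : Set K))
    (O : Subring K)
    (hO : ∀ x : K, x ∈ O ↔ ∃ n : ℤ, ∃ y ∈ OK, x = (n : K) + (f : K) * y)
    (A : AddSubgroup K) (hAsub : (A : Set K) ⊆ OK)
    (hAideal : ∀ x ∈ OK, ∀ y ∈ A, x * y ∈ A)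
    (hAcop : ∀ z ∈ OK, ∃ x ∈ A, ∃ y ∈ OK, z = x + ((N * f : ℕ) : K) * y) :
    (∀ z ∈ OK, ∃ w ∈ O, z - w ∈ A) ∧
    A.relIndex OK.toAddSubgroup = (A ⊓ O.toAddSubgroup).relIndex O.toAddSubgroup ∧
    AddSubgroup.closure {z : K | ∃ x ∈ A ⊓ O.toAddSubgroup, ∃ y ∈ OK, z = x * y} = A := by
  -- `Nf·y ∈ O` for `y ∈ OK`
  have hNfO : ∀ y ∈ OK, ((N * f : ℕ) : K) * y ∈ O := by
    intro y hy
    rw [hO]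
    exact ⟨0, (N : K) * y, OK.mul_mem (natCast_mem OK N) hy, by push_cast; ring⟩
  -- surjectivity
  have hsurj : ∀ z ∈ OK, ∃ w ∈ O, z - w ∈ A := by
    intro z hz
    obtain ⟨x, hx, y, hy, hzxy⟩ := hAcop z hz
    exact ⟨((N * f : ℕ) : K) * y, hNfO y hy, by rw [hzxy]; simpa using hx⟩
  -- `O ≤ OK`
  have hOle : O.toAddSubgroup ≤ OK.toAddSubgroup := by
    intro x hx
    obtain ⟨n, y, hy, rfl⟩ := (hO x).mp hx
    exact OK.add_mem (intCast_mem OK n) (OK.mul_mem (natCast_mem OK f) hy)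
  have hAle : A ≤ OK.toAddSubgroup := hAsub
  -- `OK = A ⊔ O`
  have hsup : OK.toAddSubgroup = A ⊔ O.toAddSubgroup := by
    refine le_antisymm ?_ (sup_le hAle hOle)
    intro z hz
    obtain ⟨w, hw, hzw⟩ := hsurj z hz
    have : z = (z - w) + w := by ring
    rw [this]
    exact AddSubgroup.add_mem _ (AddSubgroup.mem_sup_left hzw)
      (AddSubgroup.mem_sup_right hw)
  refine ⟨hsurj, ?_, ?_⟩
  · rw [hsup, AddSubgroup.relIndex_sup_left, AddSubgroup.inf_relIndex_right]
  · refine le_antisymm ((AddSubgroup.closure_le _).mpr ?_) ?_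
    · rintro z ⟨x, hx, y, hy, rfl⟩
      rw [mul_comm]
      exact hAideal y hy x hx.1
    · -- pick `x ∈ A ∩ O` with `1 = x + Nf·y`
      obtain ⟨x, hx, y, hy, hxy⟩ := hAcop 1 OK.one_mem
    -- `x ∈ O`
      have hxO : x ∈ O := by
        rw [hO]
        refine ⟨1, -((N : K) * y), OK.neg_mem (OK.mul_mem (natCast_mem OK N) hy), ?_⟩
        have : x = 1 - ((N * f : ℕ) : K) * y := by rw [hxy]; ring
        rw [this]; push_cast; ring
      intro a ha
      have haOK : a ∈ OK := hAsub ha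
      have h1 : x * a ∈ AddSubgroup.closure {z : K | ∃ x ∈ A ⊓ O.toAddSubgroup, ∃ y ∈ OK, z = x * y} :=
        AddSubgroup.subset_closure ⟨x, ⟨hx, hxO⟩, a, haOK, rfl⟩
      have hNfa : ((N * f : ℕ) : K) * a ∈ A := hAideal _ (natCast_mem OK _) a ha
      have hNfaO : ((N * f : ℕ) : K) * a ∈ O := hNfO a haOK
      have h2 : (((N * f : ℕ) : K) * a) * y ∈
          AddSubgroup.closure {z : K | ∃ x ∈ A ⊓ O.toAddSubgroup, ∃ y ∈ OK, z = x * y} :=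
        AddSubgroup.subset_closure ⟨_, ⟨hNfa, hNfaO⟩, y, hy, rfl⟩
      have : a = x * a + (((N * f : ℕ) : K) * a) * y := by
        have := hxy
        calc a = (x + ((N * f : ℕ) : K) * y) * a := by rw [← hxy]; ring
        _ = x * a + (((N * f : ℕ) : K) * a) * y := by ring
      rw [this]
      exact AddSubgroup.add_mem _ h1 h2
end

section
/- An integer m is properly N-represented by an integral binary quadratic form f(x,y) if and only if there exist integers b, c such that f is Γ_0(N)-equivalent to mx² + bxy + cy². -/
/-- `m` is properly `N`-represented by `f(x,y) = ax² + bxy + cy²`. -/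
def ProperlyNRep (N : ℕ) (a b c m : ℤ) : Prop :=
  ∃ x y : ℤ, Int.gcd x N = 1 ∧ (N : ℤ) ∣ y ∧ Int.gcd x y = 1 ∧
    a * x ^ 2 + b * x * y + c * y ^ 2 = m

/-- An integer `m` is properly `N`-represented by `f` iff `f` is `Γ₀(N)`-equivalent to a form
`mx² + b'xy + c'y²`. -/
theorem stmt_13 (N : ℕ) (hN : 0 < N) (a b c m : ℤ) :
    ProperlyNRep N a b c m ↔
      ∃ b' c' : ℤ, ∃ p q r s : ℤ, p * s - q * r = 1 ∧ (N : ℤ) ∣ r ∧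
        actF p q r s (a, b, c) = (m, b', c') := by
  constructor
  · rintro ⟨x, y, hxN, hNy, hxy, hm⟩
    have hco : IsCoprime x y := Int.isCoprime_iff_gcd_eq_one.mpr hxy
    obtain ⟨u, v, huv⟩ := hco
    exact ⟨2 * a * x * (-v) + b * (x * u + (-v) * y) + 2 * c * y * u,
      a * (-v) ^ 2 + b * (-v) * u + c * u ^ 2, x, -v, y, u, by linear_combination huv, hNy,
      by simp only [actF, Prod.mk.injEq, and_true, true_and]; linarith⟩
  · rintro ⟨b', c', p, q, r, s, hdet, hNr, hact⟩
    obtain ⟨k, hk⟩ := hNr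
    refine ⟨p, r, ?_, ⟨k, hk⟩, ?_, ?_⟩
    · rw [← Int.isCoprime_iff_gcd_eq_one]
      refine ⟨s, -(q * k), ?_⟩
      rw [hk] at hdet; linear_combination hdet
    · rw [← Int.isCoprime_iff_gcd_eq_one]
      exact ⟨s, -q, by linear_combination hdet⟩
    · have := congrArg Prod.fst hact
      simpa [actF] using this
end

section
/- Let D ≡ 0 or 1 (mod 4), m an odd integer with gcd(m,D) = 1, and N a positive integer. Then m is properly N-represented by some primitive form of discriminant D if and only if D is a quadratic residue modulo m. -/
/-- For `D ≡ 0, 1 (mod 4)`, `m` odd with `gcd(m, D) = 1`, and `N ≥ 1`: `m` is properly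
`N`-represented by some primitive form of discriminant `D` iff `D` is a quadratic residue
modulo `m`. -/
theorem stmt_14 (D m : ℤ) (N : ℕ) (hD4 : D % 4 = 0 ∨ D % 4 = 1)
    (hm : Odd m) (hmD : Int.gcd m D = 1) (hN : 0 < N) :
    (∃ a b c : ℤ, Int.gcd (Int.gcd a b) c = 1 ∧ b ^ 2 - 4 * a * c = D ∧
      ProperlyNRep N a b c m) ↔
    ∃ x : ℤ, x ^ 2 ≡ D [ZMOD m] := by
  constructor
  · rintro ⟨a, b, c, hprim, hdisc, x, y, hxN, hNy, hxy, hrep⟩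
    have hco : IsCoprime x y := Int.isCoprime_iff_gcd_eq_one.mpr hxy
    obtain ⟨p, q, hpq⟩ := hco
    refine ⟨q * (2 * a * x + b * y) - p * (b * x + 2 * c * y), ?_⟩
    have key : (q * (2 * a * x + b * y) - p * (b * x + 2 * c * y)) ^ 2 - D
        = m * (4 * a * q ^ 2 - 4 * b * p * q + 4 * c * p ^ 2) := by
      have h1 : (1 : ℤ) = p * x + q * y := hpq.symm
      calc (q * (2 * a * x + b * y) - p * (b * x + 2 * c * y)) ^ 2 - D
          = (q * (2 * a * x + b * y) - p * (b * x + 2 * c * y)) ^ 2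
            - (b ^ 2 - 4 * a * c) * (p * x + q * y) ^ 2 := by
            rw [← h1, hdisc]; ring
        _ = (a * x ^ 2 + b * x * y + c * y ^ 2)
            * (4 * a * q ^ 2 - 4 * b * p * q + 4 * c * p ^ 2) := by ring
        _ = m * (4 * a * q ^ 2 - 4 * b * p * q + 4 * c * p ^ 2) := by rw [hrep]
    exact Int.modEq_iff_dvd.mpr ⟨-(4 * a * q ^ 2 - 4 * b * p * q + 4 * c * p ^ 2),
      by linarith⟩ |>.symm.symm
  · rintro ⟨x, hx⟩
    have hm0 : m ≠ 0 := by rintro rfl; exact (Int.not_odd_iff_even.mpr Even.zero) hm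
    set b : ℤ := if (x - D) % 2 = 0 then x else x + m with hb
    have hbm : m ∣ b - x := by
      by_cases h : (x - D) % 2 = 0 <;> simp [hb, h]
    have hb2 : (2 : ℤ) ∣ b - D := by
      by_cases h : (x - D) % 2 = 0
      · simp only [hb, if_pos h]
        exact Int.dvd_of_emod_eq_zero h
      · simp only [hb, if_neg h]
        have h1 : (x - D) % 2 = 1 := by omega
        have h2 : m % 2 = 1 := Int.odd_iff.mp hm
        have : (x + m - D) % 2 = 0 := by omega
        exact Int.dvd_of_emod_eq_zero this
    have hmb2 : m ∣ b ^ 2 - D := by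
      have h1 : m ∣ b ^ 2 - x ^ 2 := by
        have e : b ^ 2 - x ^ 2 = (b - x) * (b + x) := by ring
        rw [e]; exact hbm.mul_right _
      have h2 : m ∣ x ^ 2 - D := by
        have := Int.ModEq.dvd hx
        rcases this with ⟨k, hk⟩
        exact ⟨-k, by linarith⟩
      have e : b ^ 2 - D = (b ^ 2 - x ^ 2) + (x ^ 2 - D) := by ring
      rw [e]; exact dvd_add h1 h2
    have h4b2 : (4 : ℤ) ∣ b ^ 2 - D := by
      rcases hb2 with ⟨k, hk⟩
      have hbD : b = D + 2 * k := by linarith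
      rcases hD4 with h | h
      · rcases Int.dvd_of_emod_eq_zero h with ⟨d, hd⟩
        refine ⟨4 * d ^ 2 + 4 * d * k + k ^ 2 - d, ?_⟩
        rw [hbD, hd]; ring
      · have h2 : (4 : ℤ) ∣ D - 1 := by omega
        rcases h2 with ⟨e, he⟩
        have hD1 : D = 1 + 4 * e := by linarith
        refine ⟨4 * e ^ 2 + k ^ 2 + e + k + 4 * e * k, ?_⟩
        rw [hbD, hD1]; ring
    have hcop2m : IsCoprime (2 : ℤ) m := by
      rcases hm with ⟨t, ht⟩
      exact ⟨-t, 1, by rw [ht]; ring⟩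
    have hcop4m : IsCoprime (4 : ℤ) m := by
      have := hcop2m.mul_left hcop2m
      norm_num at this
      exact this
    have h4m : (4 * m) ∣ b ^ 2 - D := hcop4m.mul_dvd h4b2 hmb2
    rcases h4m with ⟨c, hc⟩
    refine ⟨m, b, c, ?_, by linarith, 1, 0, by simp, dvd_zero _, by simp, by ring⟩
    set g : ℕ := Int.gcd (Int.gcd m b) c with hg
    have hgm : (g : ℤ) ∣ m := dvd_trans (Int.gcd_dvd_left _ _) (by exact_mod_cast Int.gcd_dvd_left _ _)
    have hgb : (g : ℤ) ∣ b := dvd_trans (Int.gcd_dvd_left _ _) (by exact_mod_cast Int.gcd_dvd_right _ _)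
    have hgc : (g : ℤ) ∣ c := Int.gcd_dvd_right _ _
    have hgD : (g : ℤ) ∣ D := by
      have : D = b * b - 4 * m * c := by nlinarith [hc]
      rw [this]
      exact dvd_sub (hgb.mul_left b) ((hgm.mul_left 4).mul_right c)
    have : (g : ℤ) ∣ (Int.gcd m D : ℤ) := by exact_mod_cast Int.dvd_gcd hgm hgD
    rw [hmD] at this
    exact_mod_cast Int.eq_one_of_dvd_one (by positivity) this
end

section
/- Let f(x,y) = ax²+bxy+cy² be a primitive binary quadratic form and n, N positive integers with gcd(a,N) = 1. Then there exists a positive integer m with gcd(m, nN) = 1 such that m is properly N-represented by f. -/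
lemma my_coprime_of (a b : ℕ) (h : ∀ p, p.Prime → p ∣ a → p ∣ b → False) :
    Nat.Coprime a b := by
  by_contra hg
  obtain ⟨p, pp, hpd⟩ := Nat.exists_prime_and_dvd hg
  exact h p pp (hpd.trans (Nat.gcd_dvd_left _ _)) (hpd.trans (Nat.gcd_dvd_right _ _))

/-- For a primitive positive-definite form `f = ax² + bxy + cy²` with `gcd(a, N) = 1` and
positive integers `n, N`, there is a positive integer `m` coprime to `nN` which is properly
`N`-represented by `f`. -/
theorem stmt_15 (a b c : ℤ) (n N : ℕ) (hn : 0 < n) (hN : 0 < N)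
    (hprim : Int.gcd (Int.gcd a b) c = 1) (ha : 0 < a)
    (hdisc : b ^ 2 - 4 * a * c < 0) (haN : Int.gcd a N = 1) :
    ∃ m : ℤ, 0 < m ∧ Int.gcd m ((n * N : ℕ) : ℤ) = 1 ∧ ProperlyNRep N a b c m := by
  set M := n * N with hM
  set t1 := M.primeFactors.filter (fun p => p ∣ a.natAbs ∧ ¬ p ∣ c.natAbs) with ht1
  set t2 := M.primeFactors.filter (fun p => ¬ p ∣ a.natAbs) with ht2
  set x0 : ℕ := ∏ p ∈ t1, p with hx0
  set y0 : ℕ := N * ∏ p ∈ t2, p with hy0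
  have hMpos : 0 < M := Nat.mul_pos hn hN
  have hx0pos : 0 < x0 := Finset.prod_pos fun p hp =>
    (Nat.prime_of_mem_primeFactors (Finset.mem_filter.mp hp).1).pos
  have hy0pos : 0 < y0 := Nat.mul_pos hN <| Finset.prod_pos fun p hp =>
    (Nat.prime_of_mem_primeFactors (Finset.mem_filter.mp hp).1).pos
  have hdx : ∀ p : ℕ, p.Prime → p ∣ x0 → p ∈ t1 := by
    intro p pp hp
    obtain ⟨q, hq, hpq⟩ := (pp.prime.dvd_finset_prod_iff _).mp hp
    rwa [(Nat.prime_dvd_prime_iff_eq pp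
      (Nat.prime_of_mem_primeFactors (Finset.mem_filter.mp hq).1)).mp hpq]
  have hdy : ∀ p : ℕ, p.Prime → p ∣ y0 → p ∣ N ∨ p ∈ t2 := by
    intro p pp hp
    rcases (Nat.Prime.dvd_mul pp).mp hp with h | h
    · exact Or.inl h
    · obtain ⟨q, hq, hpq⟩ := (pp.prime.dvd_finset_prod_iff _).mp h
      exact Or.inr <| by
        rwa [(Nat.prime_dvd_prime_iff_eq pp
          (Nat.prime_of_mem_primeFactors (Finset.mem_filter.mp hq).1)).mp hpq]
  have hNa : ∀ p : ℕ, p.Prime → p ∣ N → ¬ p ∣ a.natAbs := by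
    intro p pp hpN hpa
    have h1 : p ∣ Int.gcd a N := Nat.dvd_gcd hpa (by simpa using hpN)
    rw [haN] at h1
    exact pp.ne_one (Nat.dvd_one.mp h1)
  have hx0a : ∀ p : ℕ, p.Prime → p ∣ x0 → p ∣ a.natAbs ∧ ¬ p ∣ c.natAbs ∧ ¬ p ∣ N := by
    intro p pp hp
    have h := Finset.mem_filter.mp (hdx p pp hp)
    exact ⟨h.2.1, h.2.2, fun hpN => hNa p pp hpN h.2.1⟩
  have hy0a : ∀ p : ℕ, p.Prime → p ∣ y0 → ¬ p ∣ a.natAbs := by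
    intro p pp hp
    rcases hdy p pp hp with h | h
    · exact hNa p pp h
    · exact (Finset.mem_filter.mp h).2
  set m : ℤ := a * (x0:ℤ)^2 + b*(x0:ℤ)*(y0:ℤ) + c*(y0:ℤ)^2 with hm
  have hxy : Nat.Coprime x0 y0 := my_coprime_of _ _ fun p pp h1 h2 =>
    hy0a p pp h2 (hx0a p pp h1).1
  have hxN : Nat.Coprime x0 N := my_coprime_of _ _ fun p pp h1 h2 =>
    (hx0a p pp h1).2.2 h2
  have hy1 : (1:ℤ) ≤ (y0:ℤ) := by exact_mod_cast hy0pos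
  have hmpos : 0 < m := by nlinarith [sq_nonneg (2*a*(x0:ℤ) + b*(y0:ℤ)), sq_nonneg ((y0:ℤ))]
  have hmM : Nat.Coprime m.natAbs M := by
    apply my_coprime_of
    intro p pp hpm hpM
    have hpmZ : (p:ℤ) ∣ m := Int.natCast_dvd.mpr hpm
    by_cases hpa : p ∣ a.natAbs
    · have hpaZ : (p:ℤ) ∣ a := Int.natCast_dvd.mpr hpa
      have hpy : ¬ (p:ℤ) ∣ (y0:ℤ) := fun h =>
        hy0a p pp (by exact_mod_cast h) hpa
      by_cases hpc : p ∣ c.natAbs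
      · have hpcZ : (p:ℤ) ∣ c := Int.natCast_dvd.mpr hpc
        have hpb : ¬ p ∣ b.natAbs := by
          intro hpb
          have h1 : p ∣ Int.gcd (Int.gcd a b) c := by
            apply Nat.dvd_gcd _ hpc
            simpa [Int.gcd] using Nat.dvd_gcd hpa hpb
          rw [hprim] at h1
          exact pp.ne_one (Nat.dvd_one.mp h1)
        have hpx : ¬ p ∣ x0 := fun h => (hx0a p pp h).2.1 hpc
        have hdvd : (p:ℤ) ∣ b*(x0:ℤ)*(y0:ℤ) := by
          have h1 : (p:ℤ) ∣ a * (x0:ℤ)^2 := hpaZ.mul_right _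
          have h2 : (p:ℤ) ∣ c * (y0:ℤ)^2 := hpcZ.mul_right _
          have h3 := hpmZ.sub (h1.add h2)
          have e : m - (a * (x0:ℤ)^2 + c*(y0:ℤ)^2) = b*(x0:ℤ)*(y0:ℤ) := by
            rw [hm]; ring
          rwa [e] at h3
        rcases ((Nat.prime_iff_prime_int.mp pp).dvd_mul.mp hdvd) with h | h
        · rcases ((Nat.prime_iff_prime_int.mp pp).dvd_mul.mp h) with h' | h'
          · exact hpb (Int.natCast_dvd.mp h')
          · exact hpx (by exact_mod_cast h')
        · exact hpy h
      · -- p ∣ a, p ∤ c : p ∣ x0, p ∤ y0, so p ∤ c y0²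
        have hpN : ¬ p ∣ N := fun h => hNa p pp h hpa
        have hpx : p ∣ x0 := Finset.dvd_prod_of_mem _ <| Finset.mem_filter.mpr
          ⟨Nat.mem_primeFactors.mpr ⟨pp, hpM, hMpos.ne'⟩, hpa, hpc⟩
        have hpxZ : (p:ℤ) ∣ (x0:ℤ) := by exact_mod_cast hpx
        have hdvd : (p:ℤ) ∣ c*(y0:ℤ)^2 := by
          have h1 : (p:ℤ) ∣ a * (x0:ℤ)^2 + b*(x0:ℤ)*(y0:ℤ) := by
            have : (p:ℤ) ∣ (x0:ℤ) * (a * (x0:ℤ) + b*(y0:ℤ)) := hpxZ.mul_right _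
            have e : (x0:ℤ) * (a * (x0:ℤ) + b*(y0:ℤ)) = a*(x0:ℤ)^2 + b*(x0:ℤ)*(y0:ℤ) := by ring
            rwa [e] at this
          have h3 := hpmZ.sub h1
          have e : m - (a * (x0:ℤ)^2 + b*(x0:ℤ)*(y0:ℤ)) = c*(y0:ℤ)^2 := by rw [hm]; ring
          rwa [e] at h3
        rcases (Nat.prime_iff_prime_int.mp pp).dvd_mul.mp hdvd with h | h
        · exact hpc (Int.natCast_dvd.mp h)
        · exact hpy ((Nat.prime_iff_prime_int.mp pp).dvd_of_dvd_pow h)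
    · -- p ∤ a : p ∣ y0, p ∤ x0
      have hpy : p ∣ y0 := Dvd.dvd.mul_left (Finset.dvd_prod_of_mem _ <| Finset.mem_filter.mpr
        ⟨Nat.mem_primeFactors.mpr ⟨pp, hpM, hMpos.ne'⟩, hpa⟩) N
      have hpyZ : (p:ℤ) ∣ (y0:ℤ) := by exact_mod_cast hpy
      have hpx : ¬ p ∣ x0 := fun h => hpa (hx0a p pp h).1
      have hdvd : (p:ℤ) ∣ a*(x0:ℤ)^2 := by
        have h1 : (p:ℤ) ∣ b*(x0:ℤ)*(y0:ℤ) + c*(y0:ℤ)^2 := by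
          have : (p:ℤ) ∣ (y0:ℤ) * (b*(x0:ℤ) + c*(y0:ℤ)) := hpyZ.mul_right _
          have e : (y0:ℤ) * (b*(x0:ℤ) + c*(y0:ℤ)) = b*(x0:ℤ)*(y0:ℤ) + c*(y0:ℤ)^2 := by ring
          rwa [e] at this
        have h3 := hpmZ.sub h1
        have e : m - (b*(x0:ℤ)*(y0:ℤ) + c*(y0:ℤ)^2) = a*(x0:ℤ)^2 := by rw [hm]; ring
        rwa [e] at h3
      rcases (Nat.prime_iff_prime_int.mp pp).dvd_mul.mp hdvd with h | h
      · exact hpa (Int.natCast_dvd.mp h)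
      · exact hpx (by exact_mod_cast (Nat.prime_iff_prime_int.mp pp).dvd_of_dvd_pow h)
  refine ⟨m, hmpos, ?_, (x0:ℤ), (y0:ℤ), ?_, ⟨(∏ p ∈ t2, p : ℕ), by push_cast [hy0]; ring⟩, ?_, rfl⟩
  · simpa [Int.gcd, Int.natAbs_natCast] using hmM
  · simpa [Int.gcd, Int.natAbs_natCast] using hxN
  · simpa [Int.gcd, Int.natAbs_natCast] using hxy
end

section
/- Let p ≥ 5 be prime and S_p = {±1, ±2, ..., ±(p-1)/2}. Define f : S_p \ {1} → S_p \ {1} by f(k) = ⟨1 - k⁻¹⟩, where k⁻¹ ∈ S_p denotes the inverse of k mod p and ⟨x⟩ ∈ S_p the representative of x mod p. Then f is well-defined, f³ = id, and f(k) = k if and only if k² - k + 1 ≡ 0 (mod p). -/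
/-- Let `p ≥ 5` be prime and `S_p = {±1, …, ±(p-1)/2}`. Suppose `inv k` is the representative
in `S_p` of the inverse of `k` mod `p`, and on `S_p \ {1}` the function `f` satisfies
`f k ∈ S_p` with `f k ≡ 1 - k⁻¹ (mod p)`. Then `f` maps `S_p \ {1}` to itself,
`f³ = id`, and `f k = k` iff `k² - k + 1 ≡ 0 (mod p)`. -/
theorem stmt_19 (p : ℕ) (hp : p.Prime) (hp5 : 5 ≤ p)
    (Sp : Set ℤ) (hSp : Sp = {k : ℤ | k ≠ 0 ∧ 2 * |k| ≤ (p : ℤ) - 1})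
    (inv f : ℤ → ℤ)
    (hinv : ∀ k ∈ Sp, inv k ∈ Sp ∧ k * inv k ≡ 1 [ZMOD (p : ℤ)])
    (hf : ∀ k ∈ Sp, k ≠ 1 → f k ∈ Sp ∧ f k ≡ 1 - inv k [ZMOD (p : ℤ)]) :
    ∀ k ∈ Sp, k ≠ 1 →
      f k ≠ 1 ∧ f (f (f k)) = k ∧ (f k = k ↔ (p : ℤ) ∣ k ^ 2 - k + 1) := by
  haveI : Fact p.Prime := ⟨hp⟩
  have hp0 : (5:ℤ) ≤ p := by exact_mod_cast hp5
  have h1Sp : (1:ℤ) ∈ Sp := by rw [hSp]; constructor <;> simp <;> omega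
  have hne0 : ∀ a ∈ Sp, (a : ZMod p) ≠ 0 := by
    intro a ha h
    rw [ZMod.intCast_zmod_eq_zero_iff_dvd] at h
    rw [hSp] at ha
    have h2 := ha.2
    have := Int.le_of_dvd (abs_pos.2 ha.1) ((dvd_abs _ _).mpr h)
    omega
  have inj : ∀ a b : ℤ, a ∈ Sp → b ∈ Sp → (a : ZMod p) = (b : ZMod p) → a = b := by
    intro a b ha hb hab
    rw [hSp] at ha hb
    have hd : (p:ℤ) ∣ a - b := by
      have : ((a - b : ℤ) : ZMod p) = 0 := by push_cast; rw [hab]; ring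
      rwa [ZMod.intCast_zmod_eq_zero_iff_dvd] at this
    obtain ⟨-, ha2⟩ := ha
    obtain ⟨-, hb2⟩ := hb
    have : |a - b| < p := by
      rcases abs_cases a with ⟨h1,h2⟩ <;> rcases abs_cases b with ⟨h3,h4⟩ <;>
        rcases abs_cases (a - b) with ⟨h5,h6⟩ <;> omega
    have := Int.eq_zero_of_abs_lt_dvd hd this
    omega
  have key : ∀ a ∈ Sp, a ≠ 1 → f a ≠ 1 ∧ (f a : ZMod p) = 1 - (a : ZMod p)⁻¹ := by
    intro a ha ha1
    obtain ⟨hiS, hiC⟩ := hinv a ha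
    obtain ⟨hfS, hfC⟩ := hf a ha ha1
    have ha0 : (a : ZMod p) ≠ 0 := hne0 a ha
    have hic : (a : ZMod p) * (inv a : ZMod p) = 1 := by
      have := (ZMod.intCast_eq_intCast_iff' _ _ _).mpr hiC
      push_cast at this; exact this
    have hIC : (inv a : ZMod p) = (a : ZMod p)⁻¹ := eq_inv_of_mul_eq_one_left
      (by rw [mul_comm]; exact hic)
    have hfCz : (f a : ZMod p) = 1 - (a : ZMod p)⁻¹ := by
      have := (ZMod.intCast_eq_intCast_iff' _ _ _).mpr hfC
      push_cast at this; rw [this, hIC]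
    refine ⟨?_, hfCz⟩
    intro h
    rw [h] at hfCz
    have : (a : ZMod p)⁻¹ = 0 := by push_cast at hfCz; linear_combination hfCz
    rw [inv_eq_zero] at this
    exact ha0 this
  intro k hk hk1
  have hK0 : (k : ZMod p) ≠ 0 := hne0 k hk
  have hK1 : (k : ZMod p) ≠ 1 := by
    intro h
    exact hk1 (inj k 1 hk h1Sp (by rw [h]; push_cast; ring))
  obtain ⟨hfS, -⟩ := hf k hk hk1
  obtain ⟨hfk1, hfkC⟩ := key k hk hk1
  obtain ⟨hffS, -⟩ := hf (f k) hfS hfk1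
  obtain ⟨hffk1, hffkC⟩ := key (f k) hfS hfk1
  obtain ⟨hfffS, -⟩ := hf (f (f k)) hffS hffk1
  obtain ⟨hfffk1, hfffkC⟩ := key (f (f k)) hffS hffk1
  have hA0 : (f k : ZMod p) ≠ 0 := hne0 _ hfS
  have hB0 : (f (f k) : ZMod p) ≠ 0 := hne0 _ hffS
  refine ⟨hfk1, ?_, ?_⟩
  · apply inj _ _ hfffS hk
    rw [hfffkC]
    have e1 : (f k : ZMod p) * (k : ZMod p) = (k : ZMod p) - 1 := by
      rw [hfkC]; field_simp
    have e2 : (f (f k) : ZMod p) * (f k : ZMod p) = (f k : ZMod p) - 1 := by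
      rw [hffkC]; field_simp
    -- B = 1 - A⁻¹ = (A-1)/A, and A = (K-1)/K so A - 1 = -K⁻¹, B = -1/(A*K) = -1/(K-1)
    -- C = 1 - B⁻¹ = 1 + (K-1) = K
    have hBinv : (f (f k) : ZMod p)⁻¹ = 1 - (k : ZMod p) := by
      refine (eq_inv_of_mul_eq_one_left ?_).symm
      linear_combination ((f (f k) : ZMod p) - 1) * e1 - (k : ZMod p) * e2
    rw [hBinv]; ring
  · constructor
    · intro h
      have hz : ((k ^ 2 - k + 1 : ℤ) : ZMod p) = 0 := by
        push_cast
        have : (k : ZMod p) = 1 - (k : ZMod p)⁻¹ := by rw [← hfkC, h]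
        have e : (k : ZMod p) * (k : ZMod p) = (k : ZMod p) - 1 := by
          linear_combination (k : ZMod p) * this - mul_inv_cancel₀ hK0
        linear_combination e
      rwa [ZMod.intCast_zmod_eq_zero_iff_dvd] at hz
    · intro h
      apply inj _ _ hfS hk
      rw [hfkC]
      have hz : ((k ^ 2 - k + 1 : ℤ) : ZMod p) = 0 := by
        rw [ZMod.intCast_zmod_eq_zero_iff_dvd]; exact h
      push_cast at hz
      have h2 : (k : ZMod p) * (k : ZMod p)⁻¹ = 1 := mul_inv_cancel₀ hK0
      field_simp
      linear_combination -hz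
end
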